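/- Let u, v, w, x be four points of ℝ². Define Q = {p ∈ ℝ² : there exists a on the segment from u to v with p₁ ≤ a₁ and p₂ ≥ a₂} and R = {p ∈ ℝ² : there exists b on the segment from x to w with p₁ ≥ b₁ and p₂ ≤ b₂}. Then there exist a point a on the segment from u to v and a point b on the segment from x to w with b₁ ≤ a₁ and b₂ ≥ a₂, if and only if x ∈ Q or w ∈ Q or u ∈ R or v ∈ R. -/

import Mathlib

/-- For any two vectors in the plane, there is a nonzero direction in the polar cone. -/
lemma exists_dir (a1 a2 b1 b2 : ℝ) :
    ∃ p q : ℝ, ¬(p = 0 ∧ q = 0) ∧ a1 * p + a2 * q ≤ 0 ∧ b1 * p + b2 * q ≤ 0 := by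
  by_cases ha : a1 = 0 ∧ a2 = 0
  · by_cases hb : b1 = 0 ∧ b2 = 0
    · exact ⟨1, 0, by simp, by simp [ha.1, ha.2], by simp [hb.1, hb.2]⟩
    · refine ⟨-b1, -b2, ?_, by simp [ha.1, ha.2], by nlinarith [sq_nonneg b1, sq_nonneg b2]⟩
      intro ⟨h1, h2⟩
      exact hb ⟨by linarith, by linarith⟩
  · by_cases hs : b1 * a2 - b2 * a1 ≤ 0
    · refine ⟨a2, -a1, ?_, by ring_nf; nlinarith, by nlinarith⟩
      intro ⟨h1, h2⟩
      exact ha ⟨by linarith, by linarith⟩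
    · refine ⟨-a2, a1, ?_, by ring_nf; nlinarith, by nlinarith⟩
      intro ⟨h1, h2⟩
      exact ha ⟨by linarith, by linarith⟩

/-- 1-D ray exit from [0,1]. -/
lemma exit1 (t p : ℝ) (ht0 : 0 ≤ t) (ht1 : t ≤ 1) (hp : p ≠ 0) :
    ∃ l, 0 ≤ l ∧ (∀ m, 0 ≤ m → m ≤ l → 0 ≤ t + m * p ∧ t + m * p ≤ 1) ∧
      (t + l * p = 0 ∨ t + l * p = 1) := by
  rcases hp.lt_or_gt with h | h
  · have hnp : (0:ℝ) < -p := by linarith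
    refine ⟨t / (-p), div_nonneg ht0 hnp.le, ?_, Or.inl ?_⟩
    · intro m hm0 hml
      have : m * (-p) ≤ t := (le_div_iff₀ hnp).mp hml
      constructor
      · nlinarith
      · nlinarith
    · field_simp
      ring
  · refine ⟨(1 - t) / p, div_nonneg (by linarith) h.le, ?_, Or.inr ?_⟩
    · intro m hm0 hml
      have : m * p ≤ 1 - t := (le_div_iff₀ h).mp hml
      constructor
      · nlinarith
      · linarith
    · field_simp
      ring

/-- 2-D ray exit from the unit square. -/
lemma exit2 (t s p q : ℝ) (ht0 : 0 ≤ t) (ht1 : t ≤ 1) (hs0 : 0 ≤ s) (hs1 : s ≤ 1)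
    (hpq : ¬(p = 0 ∧ q = 0)) :
    ∃ l, 0 ≤ l ∧ 0 ≤ t + l * p ∧ t + l * p ≤ 1 ∧ 0 ≤ s + l * q ∧ s + l * q ≤ 1 ∧
      (t + l * p = 0 ∨ t + l * p = 1 ∨ s + l * q = 0 ∨ s + l * q = 1) := by
  by_cases hp : p = 0
  · have hq : q ≠ 0 := fun h => hpq ⟨hp, h⟩
    obtain ⟨l, hl0, hbd, heq⟩ := exit1 s q hs0 hs1 hq
    obtain ⟨h1, h2⟩ := hbd l hl0 le_rfl
    exact ⟨l, hl0, by simp [hp, ht0], by simp [hp, ht1], h1, h2, by tauto⟩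
  · by_cases hq : q = 0
    · obtain ⟨l, hl0, hbd, heq⟩ := exit1 t p ht0 ht1 hp
      obtain ⟨h1, h2⟩ := hbd l hl0 le_rfl
      exact ⟨l, hl0, h1, h2, by simp [hq, hs0], by simp [hq, hs1], by tauto⟩
    · obtain ⟨l1, hl10, hbd1, heq1⟩ := exit1 t p ht0 ht1 hp
      obtain ⟨l2, hl20, hbd2, heq2⟩ := exit1 s q hs0 hs1 hq
      refine ⟨min l1 l2, le_min hl10 hl20, ?_, ?_, ?_, ?_, ?_⟩
      · exact (hbd1 _ (le_min hl10 hl20) (min_le_left _ _)).1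
      · exact (hbd1 _ (le_min hl10 hl20) (min_le_left _ _)).2
      · exact (hbd2 _ (le_min hl10 hl20) (min_le_right _ _)).1
      · exact (hbd2 _ (le_min hl10 hl20) (min_le_right _ _)).2
      · rcases min_choice l1 l2 with h | h <;> rw [h]
        · tauto
        · tauto

theorem segment_points_iff_vertex_in_region (u v w x : ℝ × ℝ) :
    let Q : Set (ℝ × ℝ) := {p | ∃ a ∈ segment ℝ u v, p.1 ≤ a.1 ∧ p.2 ≥ a.2}
    let R : Set (ℝ × ℝ) := {p | ∃ b ∈ segment ℝ x w, p.1 ≥ b.1 ∧ p.2 ≤ b.2}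
    (∃ a ∈ segment ℝ u v, ∃ b ∈ segment ℝ x w, b.1 ≤ a.1 ∧ b.2 ≥ a.2) ↔
      x ∈ Q ∨ w ∈ Q ∨ u ∈ R ∨ v ∈ R := by
  intro Q R
  constructor
  · rintro ⟨a, ha, b, hb, hb1, hb2⟩
    rw [segment_eq_image] at ha hb
    obtain ⟨t, ⟨ht0, ht1⟩, rfl⟩ := ha
    obtain ⟨s, ⟨hs0, hs1⟩, rfl⟩ := hb
    simp only [Prod.fst_add, Prod.snd_add, Prod.smul_fst, Prod.smul_snd, smul_eq_mul,
      ge_iff_le] at hb1 hb2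
    obtain ⟨p, q, hpq, hα, hβ⟩ :=
      exists_dir (-(v.1 - u.1)) (w.1 - x.1) (v.2 - u.2) (-(w.2 - x.2))
    obtain ⟨l, hl0, ht'0, ht'1, hs'0, hs'1, hcase⟩ := exit2 t s p q ht0 ht1 hs0 hs1 hpq
    have key1 : (1 - (s + l * q)) * x.1 + (s + l * q) * w.1 ≤
        (1 - (t + l * p)) * u.1 + (t + l * p) * v.1 := by
      nlinarith [mul_nonpos_of_nonneg_of_nonpos hl0 hα]
    have key2 : (1 - (t + l * p)) * u.2 + (t + l * p) * v.2 ≤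
        (1 - (s + l * q)) * x.2 + (s + l * q) * w.2 := by
      nlinarith [mul_nonpos_of_nonneg_of_nonpos hl0 hβ]
    set t' := t + l * p with ht'def
    set s' := s + l * q with hs'def
    rcases hcase with h | h | h | h
    · -- t' = 0 : u ∈ R
      refine Or.inr (Or.inr (Or.inl ⟨(1 - s') • x + s' • w, ?_, ?_, ?_⟩))
      · rw [segment_eq_image]; exact ⟨s', ⟨hs'0, hs'1⟩, rfl⟩
      · simp only [Prod.fst_add, Prod.smul_fst, smul_eq_mul, ge_iff_le]
        rw [h] at key1; linarith
      · simp only [Prod.snd_add, Prod.smul_snd, smul_eq_mul]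
        rw [h] at key2; linarith
    · -- t' = 1 : v ∈ R
      refine Or.inr (Or.inr (Or.inr ⟨(1 - s') • x + s' • w, ?_, ?_, ?_⟩))
      · rw [segment_eq_image]; exact ⟨s', ⟨hs'0, hs'1⟩, rfl⟩
      · simp only [Prod.fst_add, Prod.smul_fst, smul_eq_mul, ge_iff_le]
        rw [h] at key1; linarith
      · simp only [Prod.snd_add, Prod.smul_snd, smul_eq_mul]
        rw [h] at key2; linarith
    · -- s' = 0 : x ∈ Q
      refine Or.inl ⟨(1 - t') • u + t' • v, ?_, ?_, ?_⟩
      · rw [segment_eq_image]; exact ⟨t', ⟨ht'0, ht'1⟩, rfl⟩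
      · simp only [Prod.fst_add, Prod.smul_fst, smul_eq_mul]
        rw [h] at key1; linarith
      · simp only [Prod.snd_add, Prod.smul_snd, smul_eq_mul, ge_iff_le]
        rw [h] at key2; linarith
    · -- s' = 1 : w ∈ Q
      refine Or.inr (Or.inl ⟨(1 - t') • u + t' • v, ?_, ?_, ?_⟩)
      · rw [segment_eq_image]; exact ⟨t', ⟨ht'0, ht'1⟩, rfl⟩
      · simp only [Prod.fst_add, Prod.smul_fst, smul_eq_mul]
        rw [h] at key1; linarith
      · simp only [Prod.snd_add, Prod.smul_snd, smul_eq_mul, ge_iff_le]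
        rw [h] at key2; linarith
  · rintro (⟨a, ha, h1, h2⟩ | ⟨a, ha, h1, h2⟩ | ⟨b, hb, h1, h2⟩ | ⟨b, hb, h1, h2⟩)
    · exact ⟨a, ha, x, left_mem_segment ℝ x w, h1, h2⟩
    · exact ⟨a, ha, w, right_mem_segment ℝ x w, h1, h2⟩
    · exact ⟨u, left_mem_segment ℝ u v, b, hb, h1, h2⟩
    · exact ⟨v, right_mem_segment ℝ u v, b, hb, h1, h2⟩
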